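/- (Mathias) If T is an n×n matrix such that both Δ(|T|) and Δ(|T*|) are scalar multiples of the identity, then ‖T‖_m = (1/n)·Tr(|T|). -/

import Mathlib

open scoped ENNReal ComplexOrder Matrix

noncomputable def opNorm2 {m : Type*} [Fintype m] [DecidableEq m] (M : Matrix m m ℂ) : ℝ :=
  ‖Matrix.toEuclideanCLM (𝕜 := ℂ) M‖

noncomputable def schurNorm {m : Type*} [Fintype m] [DecidableEq m] (M : Matrix m m ℂ) : ℝ :=
  ⨆ X : {X : Matrix m m ℂ // opNorm2 X ≤ 1}, opNorm2 (M.hadamard X.1)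

noncomputable def schurNormENN (A : ℕ → ℕ → ℂ) : ℝ≥0∞ :=
  ⨆ n : ℕ, ENNReal.ofReal (schurNorm (Matrix.of fun i j : Fin n => A i j))

noncomputable def schurBound (P : Set (ℕ × ℕ)) : ℝ≥0∞ :=
  ⨆ S : {S : ℕ → ℕ → ℂ //
      (∀ i j, ‖S i j‖ ≤ 1) ∧ ∀ i j, (i, j) ∉ P → S i j = 0},
    schurNormENN S.1

noncomputable def matAbs {m : Type*} [Fintype m] [DecidableEq m] (T : Matrix m m ℂ) :
    Matrix m m ℂ :=
  (Matrix.posSemidef_conjTranspose_mul_self T).1.eigenvectorUnitary *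
    Matrix.diagonal (((↑) : ℝ → ℂ) ∘ (√·) ∘ (Matrix.posSemidef_conjTranspose_mul_self T).1.eigenvalues) *
    (star (Matrix.posSemidef_conjTranspose_mul_self T).1.eigenvectorUnitary : Matrix m m ℂ)

open scoped MatrixOrder in
lemma matAbs_eq_sqrt {m : Type*} [Fintype m] [DecidableEq m] (T : Matrix m m ℂ) :
    matAbs T = CFC.sqrt (Tᴴ * T) := by
  have hM := Matrix.posSemidef_conjTranspose_mul_self T
  rw [CFC.sqrt_eq_cfc, cfc_nnreal_eq_real _ _ (Matrix.nonneg_iff_posSemidef.mpr hM), hM.1.cfc_eq]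
  simp only [Matrix.IsHermitian.cfc, Unitary.conjStarAlgAut_apply, matAbs]
  congr 3
  funext i
  simp [Real.coe_sqrt, Real.coe_toNNReal', max_eq_left (hM.eigenvalues_nonneg i)]

open scoped MatrixOrder in
lemma matAbs_psd {m : Type*} [Fintype m] [DecidableEq m] (T : Matrix m m ℂ) :
    (matAbs T).PosSemidef := by
  rw [matAbs_eq_sqrt]; exact Matrix.nonneg_iff_posSemidef.mp (CFC.sqrt_nonneg _)

open scoped MatrixOrder in
lemma matAbs_mul_self {m : Type*} [Fintype m] [DecidableEq m] (T : Matrix m m ℂ) :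
    matAbs T * matAbs T = Tᴴ * T := by
  rw [matAbs_eq_sqrt]
  exact CFC.sqrt_mul_sqrt_self _
    (Matrix.nonneg_iff_posSemidef.mpr (Matrix.posSemidef_conjTranspose_mul_self T))

open scoped MatrixOrder in
lemma matAbs_unique {m : Type*} [Fintype m] [DecidableEq m] (T Q : Matrix m m ℂ)
    (hQ : Q.PosSemidef) (h : Q * Q = Tᴴ * T) : Q = matAbs T := by
  rw [matAbs_eq_sqrt]
  exact (CFC.sqrt_unique h (Matrix.nonneg_iff_posSemidef.mpr hQ)).symm

open scoped MatrixOrder in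
lemma exists_psd_sqrt {m : Type*} [Fintype m] [DecidableEq m] (A : Matrix m m ℂ)
    (hA : A.PosSemidef) : ∃ C : Matrix m m ℂ, C.PosSemidef ∧ C * C = A :=
  ⟨CFC.sqrt A, Matrix.nonneg_iff_posSemidef.mp (CFC.sqrt_nonneg _),
    CFC.sqrt_mul_sqrt_self _ (Matrix.nonneg_iff_posSemidef.mpr hA)⟩

section Tools

variable {m : Type*} [Fintype m] [DecidableEq m]

lemma euclid_apply (M : Matrix m m ℂ) (x : EuclideanSpace ℂ m) (i : m) :
    (Matrix.toEuclideanCLM (𝕜 := ℂ) M x) i = ∑ j, M i j * x j := rfl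

lemma inner_euclid (M : Matrix m m ℂ) (x y : EuclideanSpace ℂ m) :
    inner (𝕜 := ℂ) y (Matrix.toEuclideanCLM (𝕜 := ℂ) M x)
      = ∑ i, ∑ j, starRingEnd ℂ (y i) * (M i j * x j) := by
  simp [PiLp.inner_apply, euclid_apply, Finset.mul_sum]
  simp only [Finset.sum_mul]
  exact Finset.sum_congr rfl fun _ _ => Finset.sum_congr rfl fun _ _ => mul_comm _ _

/-- lower-bound tool -/
lemma bilin_le (M : Matrix m m ℂ) (x y : EuclideanSpace ℂ m) :
    ‖∑ i, ∑ j, starRingEnd ℂ (y i) * (M i j * x j)‖ ≤ opNorm2 M * ‖x‖ * ‖y‖ := by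
  rw [← inner_euclid]
  calc ‖inner (𝕜 := ℂ) y (Matrix.toEuclideanCLM (𝕜 := ℂ) M x)‖
      ≤ ‖y‖ * ‖Matrix.toEuclideanCLM (𝕜 := ℂ) M x‖ := norm_inner_le_norm _ _
    _ ≤ ‖y‖ * (opNorm2 M * ‖x‖) := by
        gcongr; exact (Matrix.toEuclideanCLM (𝕜 := ℂ) M).le_opNorm x
    _ = opNorm2 M * ‖x‖ * ‖y‖ := by ring

/-- upper-bound tool -/
lemma opNorm2_le_bilin (M : Matrix m m ℂ) {K : ℝ} (hK : 0 ≤ K)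
    (h : ∀ x y : EuclideanSpace ℂ m,
      ‖∑ i, ∑ j, starRingEnd ℂ (y i) * (M i j * x j)‖ ≤ K * ‖x‖ * ‖y‖) :
    opNorm2 M ≤ K := by
  apply ContinuousLinearMap.opNorm_le_bound _ hK
  intro x
  set z := Matrix.toEuclideanCLM (𝕜 := ℂ) M x with hz
  have h1 : ‖z‖ ^ 2 = Complex.re (inner (𝕜 := ℂ) z z) := by
    rw [← inner_self_eq_norm_sq (𝕜 := ℂ)]; rfl
  have h2 : Complex.re (inner (𝕜 := ℂ) z z) ≤ K * ‖x‖ * ‖z‖ := by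
    calc Complex.re (inner (𝕜 := ℂ) z z) ≤ ‖inner (𝕜 := ℂ) z z‖ := Complex.re_le_norm _
      _ ≤ K * ‖x‖ * ‖z‖ := by rw [inner_euclid]; exact h x z
  have h3 : ‖z‖ ^ 2 ≤ (K * ‖x‖) * ‖z‖ := by rw [h1]; linarith
  rcases eq_or_lt_of_le (norm_nonneg z) with h0 | h0
  · rw [← h0]; positivity
  · nlinarith [h3]

lemma opNorm2_sq (M : Matrix m m ℂ) : opNorm2 (Mᴴ * M) = opNorm2 M * opNorm2 M := by
  unfold opNorm2
  rw [map_mul, ← Matrix.star_eq_conjTranspose, map_star]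
  exact ContinuousLinearMap.norm_adjoint_comp_self _

noncomputable def conjV (x : EuclideanSpace ℂ m) : EuclideanSpace ℂ m :=
  (WithLp.equiv 2 (m → ℂ)).symm (fun i => starRingEnd ℂ (x i))

@[simp] lemma conjV_apply (x : EuclideanSpace ℂ m) (i : m) :
    conjV x i = starRingEnd ℂ (x i) := rfl

lemma conjV_norm (x : EuclideanSpace ℂ m) : ‖conjV x‖ = ‖x‖ := by
  rw [EuclideanSpace.norm_eq, EuclideanSpace.norm_eq]
  congr 1
  exact Finset.sum_congr rfl fun i _ => by simp

lemma euclid_norm_sq (x : EuclideanSpace ℂ m) : ‖x‖ ^ 2 = ∑ i, ‖x i‖ ^ 2 := by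
  rw [EuclideanSpace.norm_eq, Real.sq_sqrt]
  positivity

/-- entrywise conjugation does not increase the operator norm -/
lemma opNorm2_conj_le (M : Matrix m m ℂ) :
    opNorm2 (M.map (starRingEnd ℂ)) ≤ opNorm2 M := by
  apply opNorm2_le_bilin _ (norm_nonneg _)
  intro x y
  have key : starRingEnd ℂ (∑ i, ∑ j, starRingEnd ℂ (y i) * (M.map (starRingEnd ℂ) i j * x j))
      = ∑ i, ∑ j, starRingEnd ℂ (conjV y i) * (M i j * conjV x j) := by
    rw [map_sum]
    refine Finset.sum_congr rfl fun i _ => ?_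
    rw [map_sum]
    refine Finset.sum_congr rfl fun j _ => ?_
    simp [Matrix.map_apply]
  have hnorm : ‖∑ i, ∑ j, starRingEnd ℂ (y i) * (M.map (starRingEnd ℂ) i j * x j)‖
      = ‖∑ i, ∑ j, starRingEnd ℂ (conjV y i) * (M i j * conjV x j)‖ := by
    rw [← key, RCLike.norm_conj]
  rw [hnorm]
  calc ‖∑ i, ∑ j, starRingEnd ℂ (conjV y i) * (M i j * conjV x j)‖
      ≤ opNorm2 M * ‖conjV x‖ * ‖conjV y‖ := bilin_le M (conjV x) (conjV y)
    _ = opNorm2 M * ‖x‖ * ‖y‖ := by rw [conjV_norm, conjV_norm]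

lemma diag_mul_conjTranspose_re (M : Matrix m m ℂ) (i : m) :
    (M * Mᴴ) i i = ((∑ k, ‖M i k‖ ^ 2 : ℝ) : ℂ) := by
  rw [Matrix.mul_apply]
  push_cast
  refine Finset.sum_congr rfl fun k _ => ?_
  rw [Matrix.conjTranspose_apply]
  exact Complex.mul_conj' (M i k)

lemma diag_conjTranspose_mul_re (M : Matrix m m ℂ) (j : m) :
    (Mᴴ * M) j j = ((∑ k, ‖M k j‖ ^ 2 : ℝ) : ℂ) := by
  rw [Matrix.mul_apply]
  push_cast
  refine Finset.sum_congr rfl fun k _ => ?_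
  rw [Matrix.conjTranspose_apply]
  exact Complex.conj_mul' (M k j)

lemma triple_swap {ι κ γ : Type*} [Fintype ι] [Fintype κ] [Fintype γ] {M : Type*}
    [AddCommMonoid M] (F : ι → κ → γ → M) :
    ∑ i, ∑ j, ∑ k, F i j k = ∑ k, ∑ i, ∑ j, F i j k :=
  calc ∑ i, ∑ j, ∑ k, F i j k = ∑ i, ∑ k, ∑ j, F i j k :=
        Finset.sum_congr rfl fun _ _ => Finset.sum_comm
    _ = ∑ k, ∑ i, ∑ j, F i j k := Finset.sum_comm

end Tools

set_option maxHeartbeats 2000000 in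
theorem stmt_14 {n : ℕ} (hn : 0 < n) (T : Matrix (Fin n) (Fin n) ℂ)
    (h1 : ∃ c : ℂ, ∀ i, matAbs T i i = c)
    (h2 : ∃ c : ℂ, ∀ i, matAbs Tᴴ i i = c) :
    schurNorm T = ((matAbs T).trace).re / n := by
  classical
  obtain ⟨c₁, hc₁⟩ := h1
  obtain ⟨c₂, hc₂⟩ := h2
  set A := matAbs T with hAdef
  have hA : A.PosSemidef := matAbs_psd T
  have hAsq : A * A = Tᴴ * T := matAbs_mul_self T
  set B := matAbs Tᴴ with hBdef
  have hB : B.PosSemidef := matAbs_psd Tᴴ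
  have hH : A.IsHermitian := hA.1
  set V : Matrix (Fin n) (Fin n) ℂ := ↑(hH.eigenvectorUnitary) with hVdef
  set d : Fin n → ℝ := hH.eigenvalues with hddef
  have hd0 : ∀ i, 0 ≤ d i := fun i => hA.eigenvalues_nonneg i
  have hVV : Vᴴ * V = 1 := by
    have h := hH.eigenvectorUnitary.2
    rw [Unitary.mem_iff] at h
    exact h.1
  have hspec : A = V * Matrix.diagonal (fun i => (d i : ℂ)) * Vᴴ := by
    have h := hH.spectral_theorem
    rw [Unitary.conjStarAlgAut_apply, Matrix.star_eq_conjTranspose] at h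
    exact h
  have key : ∀ e f : Fin n → ℂ, (V * Matrix.diagonal e * Vᴴ) * (V * Matrix.diagonal f * Vᴴ)
      = V * Matrix.diagonal (fun i => e i * f i) * Vᴴ := by
    intro e f
    calc (V * Matrix.diagonal e * Vᴴ) * (V * Matrix.diagonal f * Vᴴ)
        = V * Matrix.diagonal e * ((Vᴴ * V) * (Matrix.diagonal f * Vᴴ)) := by
          simp only [Matrix.mul_assoc]
      _ = V * Matrix.diagonal e * (Matrix.diagonal f * Vᴴ) := by rw [hVV, one_mul]
      _ = V * (Matrix.diagonal e * Matrix.diagonal f) * Vᴴ := by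
          simp only [Matrix.mul_assoc]
      _ = _ := by rw [Matrix.diagonal_mul_diagonal]
  have keyH : ∀ e : Fin n → ℂ, star e = e →
      (V * Matrix.diagonal e * Vᴴ)ᴴ = V * Matrix.diagonal e * Vᴴ := by
    intro e he
    rw [Matrix.conjTranspose_mul, Matrix.conjTranspose_mul, Matrix.conjTranspose_conjTranspose,
      Matrix.diagonal_conjTranspose, he, Matrix.mul_assoc]
  have keyP : ∀ e : Fin n → ℂ, 0 ≤ e → (V * Matrix.diagonal e * Vᴴ).PosSemidef :=
    fun e he => (Matrix.PosSemidef.diagonal he).mul_mul_conjTranspose_same V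
  set pf : Fin n → ℂ := fun i => if d i = 0 then 0 else 1 with hpdef
  set gf : Fin n → ℂ := fun i => if d i = 0 then 0 else (((d i)⁻¹ : ℝ) : ℂ) with hgdef
  set P := V * Matrix.diagonal pf * Vᴴ with hPdef
  set Ainv := V * Matrix.diagonal gf * Vᴴ with hAinvdef
  have hdg : ∀ i, (d i : ℂ) * gf i = pf i := by
    intro i
    by_cases h : d i = 0
    · simp [hgdef, hpdef, h]
    · have : (d i : ℂ) ≠ 0 := Complex.ofReal_ne_zero.mpr h
      simp only [hgdef, hpdef, if_neg h, Complex.ofReal_inv]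
      field_simp
  have hdp : ∀ i, (d i : ℂ) * pf i = (d i : ℂ) := by
    intro i
    by_cases h : d i = 0 <;> simp [hpdef, h]
  have hAAinv : A * Ainv = P := by
    rw [hspec, hAinvdef, key, hPdef]
    have h : (fun i => (d i : ℂ) * gf i) = pf := funext hdg
    rw [h]
  have hAinvA : Ainv * A = P := by
    rw [hspec, hAinvdef, key, hPdef]
    have h : (fun i => gf i * (d i : ℂ)) = pf := funext fun i => by rw [mul_comm]; exact hdg i
    rw [h]
  have hAP : A * P = A := by
    rw [hspec, hPdef, key]
    have h : (fun i => (d i : ℂ) * pf i) = fun i => (d i : ℂ) := funext hdp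
    rw [h, ← hspec]
  have hPA : P * A = A := by
    rw [hspec, hPdef, key]
    have h : (fun i => pf i * (d i : ℂ)) = fun i => (d i : ℂ) :=
      funext fun i => by rw [mul_comm]; exact hdp i
    rw [h, ← hspec]
  have hPP : P * P = P := by
    rw [hPdef, key]
    have h : (fun i => pf i * pf i) = pf :=
      funext fun i => by by_cases h : d i = 0 <;> simp [hpdef, h]
    rw [h]
  have hPH : Pᴴ = P := by
    refine keyH _ (funext fun i => ?_)
    by_cases h : d i = 0 <;> simp [hpdef, h]
  have hAinvH : Ainvᴴ = Ainv := by
    refine keyH _ (funext fun i => ?_)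
    by_cases h : d i = 0 <;> simp [hgdef, h, ← Complex.ofReal_inv]
  have hAinvPsd : Ainv.PosSemidef := by
    refine keyP _ fun i => ?_
    by_cases h : d i = 0
    · simp [hgdef, h]
    · show (0 : ℂ) ≤ if d i = 0 then 0 else (((d i)⁻¹ : ℝ) : ℂ)
      rw [if_neg h, Complex.zero_le_real]
      exact inv_nonneg.mpr (hd0 i)
  -- T * P = T
  have hTP : T * P = T := by
    have h0 : A * (1 - P) = 0 := by rw [Matrix.mul_sub, hAP, Matrix.mul_one, sub_self]
    have h0' : (1 - P) * A = 0 := by rw [Matrix.sub_mul, hPA, Matrix.one_mul, sub_self]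
    have h1 : (T * (1 - P))ᴴ * (T * (1 - P)) = 0 := by
      have e1 : (T * (1 - P))ᴴ * (T * (1 - P)) = (1 - P)ᴴ * ((Tᴴ * T) * (1 - P)) := by
        rw [Matrix.conjTranspose_mul]
        simp only [Matrix.mul_assoc]
      rw [e1, ← hAsq]
      have e2 : (1 - P)ᴴ = 1 - P := by rw [Matrix.conjTranspose_sub, hPH, Matrix.conjTranspose_one]
      rw [e2]
      calc (1 - P) * (A * A * (1 - P)) = ((1 - P) * A) * (A * (1 - P)) := by
            simp only [Matrix.mul_assoc]
        _ = 0 := by rw [h0', Matrix.zero_mul]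
    have h2 : T * (1 - P) = 0 := Matrix.conjTranspose_mul_self_eq_zero.mp h1
    have h3 : T - T * P = 0 := by rw [← h2, Matrix.mul_sub, Matrix.mul_one]
    rw [sub_eq_zero] at h3
    exact h3.symm
  set W := T * Ainv with hWdef
  have hWW : Wᴴ * W = P := by
    rw [hWdef]
    calc (T * Ainv)ᴴ * (T * Ainv) = Ainvᴴ * ((Tᴴ * T) * Ainv) := by
          rw [Matrix.conjTranspose_mul]; simp only [Matrix.mul_assoc]
      _ = Ainv * (A * (A * Ainv)) := by rw [hAinvH, ← hAsq]; simp only [Matrix.mul_assoc]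
      _ = (Ainv * A) * (A * Ainv) := by simp only [Matrix.mul_assoc]
      _ = P := by rw [hAinvA, hAAinv, hPP]
  have hWA : W * A = T := by
    rw [hWdef, Matrix.mul_assoc, hAinvA, hTP]
  have hQpsd : (T * Ainv * Tᴴ).PosSemidef := hAinvPsd.mul_mul_conjTranspose_same T
  have hQsq : (T * Ainv * Tᴴ) ^ 2 = Tᴴᴴ * Tᴴ := by
    rw [Matrix.conjTranspose_conjTranspose, pow_two]
    calc (T * Ainv * Tᴴ) * (T * Ainv * Tᴴ)
        = T * Ainv * ((Tᴴ * T) * (Ainv * Tᴴ)) := by simp only [Matrix.mul_assoc]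
      _ = T * Ainv * (A * (A * Ainv) * Tᴴ) := by rw [← hAsq]; simp only [Matrix.mul_assoc]
      _ = T * ((Ainv * A) * ((A * Ainv) * Tᴴ)) := by simp only [Matrix.mul_assoc]
      _ = T * (P * (P * Tᴴ)) := by rw [hAinvA, hAAinv]
      _ = (T * P) * (P * Tᴴ) := by simp only [Matrix.mul_assoc]
      _ = T * (P * Tᴴ) := by rw [hTP]
      _ = (T * P) * Tᴴ := by simp only [Matrix.mul_assoc]
      _ = T * Tᴴ := by rw [hTP]
  have hQB : T * Ainv * Tᴴ = B := matAbs_unique Tᴴ _ hQpsd (by rw [← pow_two]; exact hQsq)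
  have hTWH : T * Wᴴ = B := by
    rw [hWdef, Matrix.conjTranspose_mul, hAinvH, ← Matrix.mul_assoc, ← hQB, Matrix.mul_assoc]
  obtain ⟨C, hC, hCsq⟩ := exists_psd_sqrt A hA
  have hCH : Cᴴ = C := hC.1
  set R := W * C with hRdef
  have hRC : R * C = T := by rw [hRdef, Matrix.mul_assoc, hCsq, hWA]
  have hRR : R * Rᴴ = B := by
    rw [hRdef, Matrix.conjTranspose_mul, hCH]
    calc (W * C) * (C * Wᴴ) = W * (C * C) * Wᴴ := by simp only [Matrix.mul_assoc]
      _ = (W * A) * Wᴴ := by rw [hCsq, Matrix.mul_assoc]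
      _ = B := by rw [hWA, hTWH]
  -- trace identity
  have htr : A.trace = B.trace := by
    have h1 : B.trace = ((Tᴴ * T) * Ainv).trace := by
      rw [← hQB]
      calc (T * Ainv * Tᴴ).trace = (Tᴴ * (T * Ainv)).trace := Matrix.trace_mul_comm _ _
        _ = ((Tᴴ * T) * Ainv).trace := by rw [Matrix.mul_assoc]
    rw [h1, ← hAsq]
    exact (calc (A * A * Ainv).trace = (A * (A * Ainv)).trace := by rw [Matrix.mul_assoc]
      _ = (A * P).trace := by rw [hAAinv]
      _ = A.trace := by rw [hAP]).symm
  -- diagonal constants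
  have i₀ : Fin n := ⟨0, hn⟩
  have hdiagA : 0 ≤ A i₀ i₀ := by
    exact hA.diag_nonneg
  set a : ℝ := c₁.re with hadef
  have h0c : (0 : ℂ) ≤ c₁ := by rw [← hc₁ i₀]; exact hdiagA
  have ha0 : 0 ≤ a := by
    have := (Complex.le_def.mp h0c).1
    simpa [hadef] using this
  have hc₁a : c₁ = (a : ℂ) := by
    have him := (Complex.le_def.mp h0c).2
    apply Complex.ext
    · simp [hadef]
    · simp [hadef, ← him]
  have htrA : A.trace = (n : ℂ) * c₁ := by
    rw [Matrix.trace]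
    have : ∀ i, A.diag i = c₁ := fun i => hc₁ i
    rw [Finset.sum_congr rfl fun i _ => this i]
    simp [mul_comm]
  have htrB : B.trace = (n : ℂ) * c₂ := by
    rw [Matrix.trace]
    have : ∀ i, B.diag i = c₂ := fun i => hc₂ i
    rw [Finset.sum_congr rfl fun i _ => this i]
    simp [mul_comm]
  have hc21 : c₂ = c₁ := by
    have hne : (n : ℂ) ≠ 0 := Nat.cast_ne_zero.mpr hn.ne'
    have h := htr
    rw [htrA, htrB] at h
    exact (mul_left_cancel₀ hne h.symm)
  -- row and column norm identities
  have hcol : ∀ j, ∑ k, ‖C k j‖ ^ 2 = a := by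
    intro j
    have h := diag_conjTranspose_mul_re C j
    rw [hCH, hCsq] at h
    rw [hc₁ j, hc₁a] at h
    exact_mod_cast h.symm
  have hrow : ∀ i, ∑ k, ‖R i k‖ ^ 2 = a := by
    intro i
    have h := diag_mul_conjTranspose_re R i
    rw [hRR, hc₂ i, hc21, hc₁a] at h
    exact_mod_cast h.symm
  -- upper bound
  have hupper : ∀ X : Matrix (Fin n) (Fin n) ℂ, opNorm2 X ≤ 1 →
      opNorm2 (T.hadamard X) ≤ a := by
    intro X hX
    apply opNorm2_le_bilin _ ha0
    intro x y
    set u : Fin n → EuclideanSpace ℂ (Fin n) :=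
      fun k => (WithLp.equiv 2 (Fin n → ℂ)).symm (fun j => C k j * x j) with hudef
    set w : Fin n → EuclideanSpace ℂ (Fin n) :=
      fun k => (WithLp.equiv 2 (Fin n → ℂ)).symm (fun i => starRingEnd ℂ (R i k) * y i)
      with hwdef
    have hT : ∀ i j, T i j = ∑ k, R i k * C k j := by
      intro i j
      conv_lhs => rw [← hRC]
      rw [Matrix.mul_apply]
    have hsplit : ∑ i, ∑ j, starRingEnd ℂ (y i) * ((T.hadamard X) i j * x j)
        = ∑ k, ∑ i, ∑ j, starRingEnd ℂ (w k i) * (X i j * u k j) := by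
      have step1 : ∑ i, ∑ j, starRingEnd ℂ (y i) * ((T.hadamard X) i j * x j)
          = ∑ i, ∑ j, ∑ k, starRingEnd ℂ (w k i) * (X i j * u k j) := by
        refine Finset.sum_congr rfl fun i _ => Finset.sum_congr rfl fun j _ => ?_
        rw [Matrix.hadamard_apply, hT i j, Finset.sum_mul, Finset.sum_mul, Finset.mul_sum]
        refine Finset.sum_congr rfl fun k _ => ?_
        have hw : starRingEnd ℂ (w k i) = R i k * starRingEnd ℂ (y i) := by
          simp [hwdef]
        have hu : u k j = C k j * x j := rfl
        rw [hw, hu]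
        ring
      rw [step1]
      exact triple_swap _
    rw [hsplit]
    have husq : ∑ k, ‖u k‖ ^ 2 = a * ‖x‖ ^ 2 := by
      have h1 : ∀ k, ‖u k‖ ^ 2 = ∑ j, ‖C k j‖ ^ 2 * ‖x j‖ ^ 2 := by
        intro k
        rw [euclid_norm_sq]
        exact Finset.sum_congr rfl fun j _ => by simp [hudef, norm_mul, mul_pow]
      rw [Finset.sum_congr rfl fun k _ => h1 k, Finset.sum_comm]
      rw [euclid_norm_sq, Finset.mul_sum]
      refine Finset.sum_congr rfl fun j _ => ?_
      rw [← Finset.sum_mul, hcol j]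
    have hwsq : ∑ k, ‖w k‖ ^ 2 = a * ‖y‖ ^ 2 := by
      have h1 : ∀ k, ‖w k‖ ^ 2 = ∑ i, ‖R i k‖ ^ 2 * ‖y i‖ ^ 2 := by
        intro k
        rw [euclid_norm_sq]
        exact Finset.sum_congr rfl fun i _ => by simp [hwdef, norm_mul, mul_pow]
      rw [Finset.sum_congr rfl fun k _ => h1 k, Finset.sum_comm]
      rw [euclid_norm_sq, Finset.mul_sum]
      refine Finset.sum_congr rfl fun i _ => ?_
      rw [← Finset.sum_mul, hrow i]
    have hCS : ∑ k, ‖u k‖ * ‖w k‖ ≤ a * ‖x‖ * ‖y‖ := by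
      have h1 := Finset.sum_mul_sq_le_sq_mul_sq Finset.univ (fun k => ‖u k‖) (fun k => ‖w k‖)
      rw [husq, hwsq] at h1
      have h2 : (a * ‖x‖ * ‖y‖) ^ 2 = a * ‖x‖ ^ 2 * (a * ‖y‖ ^ 2) := by ring
      have h3 : 0 ≤ ∑ k, ‖u k‖ * ‖w k‖ :=
        Finset.sum_nonneg fun k _ => mul_nonneg (norm_nonneg _) (norm_nonneg _)
      have h4 : 0 ≤ a * ‖x‖ * ‖y‖ := by positivity
      nlinarith [h1, h2, h3, h4]
    calc ‖∑ k, ∑ i, ∑ j, starRingEnd ℂ (w k i) * (X i j * u k j)‖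
        ≤ ∑ k, ‖∑ i, ∑ j, starRingEnd ℂ (w k i) * (X i j * u k j)‖ :=
          norm_sum_le _ _
      _ ≤ ∑ k, ‖u k‖ * ‖w k‖ := by
          refine Finset.sum_le_sum fun k _ => ?_
          calc ‖∑ i, ∑ j, starRingEnd ℂ (w k i) * (X i j * u k j)‖
              ≤ opNorm2 X * ‖u k‖ * ‖w k‖ := bilin_le X (u k) (w k)
            _ ≤ 1 * ‖u k‖ * ‖w k‖ :=
                mul_le_mul_of_nonneg_right
                  (mul_le_mul_of_nonneg_right hX (norm_nonneg _)) (norm_nonneg _)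
            _ = ‖u k‖ * ‖w k‖ := by ring
      _ ≤ a * ‖x‖ * ‖y‖ := hCS
  -- operator norm of W at most one
  have hPnn : 0 ≤ opNorm2 P := norm_nonneg _
  have hWnn : 0 ≤ opNorm2 W := norm_nonneg _
  have hPnorm : opNorm2 P ≤ 1 := by
    have h := opNorm2_sq P
    rw [hPH, hPP] at h
    nlinarith [sq_nonneg (opNorm2 P - 1), h, hPnn]
  have hWnorm : opNorm2 W ≤ 1 := by
    have h := opNorm2_sq W
    rw [hWW] at h
    nlinarith [h, hPnorm, hWnn]
  set X₀ : Matrix (Fin n) (Fin n) ℂ := W.map (starRingEnd ℂ) with hX₀def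
  have hX₀ : opNorm2 X₀ ≤ 1 := le_trans (opNorm2_conj_le W) hWnorm
  -- lower bound
  have hlow : a ≤ opNorm2 (T.hadamard X₀) := by
    set uall : EuclideanSpace ℂ (Fin n) := (WithLp.equiv 2 (Fin n → ℂ)).symm (fun _ => 1)
      with hualldef
    have huall : ‖uall‖ ^ 2 = n := by
      rw [euclid_norm_sq]
      simp [hualldef]
    have hval : ∑ i, ∑ j, starRingEnd ℂ (uall i) * ((T.hadamard X₀) i j * uall j)
        = (n : ℂ) * c₁ := by
      have h1 : ∀ i j, starRingEnd ℂ (uall i) * ((T.hadamard X₀) i j * uall j)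
          = T i j * Wᴴ j i := by
        intro i j
        have : uall i = 1 := rfl
        simp [Matrix.hadamard_apply, hX₀def, Matrix.map_apply, Matrix.conjTranspose_apply,
          hualldef]
      rw [Finset.sum_congr rfl fun i _ => Finset.sum_congr rfl fun j _ => h1 i j]
      have h2 : ∀ i, ∑ j, T i j * Wᴴ j i = (T * Wᴴ) i i := fun i => (Matrix.mul_apply).symm
      rw [Finset.sum_congr rfl fun i _ => h2 i]
      have h3 : ∑ i, (T * Wᴴ) i i = (T * Wᴴ).trace := rfl
      rw [h3, hTWH, htrB, hc21]
    have hb := bilin_le (T.hadamard X₀) uall uall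
    rw [hval] at hb
    have hnorm : ‖(n : ℂ) * c₁‖ = n * a := by
      rw [norm_mul, hc₁a]
      simp [Complex.norm_real, abs_of_nonneg ha0]
    rw [hnorm] at hb
    have hun : ‖uall‖ * ‖uall‖ = (n : ℝ) := by
      have := huall
      nlinarith
    have hb2 : (n : ℝ) * a ≤ opNorm2 (T.hadamard X₀) * n := by
      calc (n : ℝ) * a ≤ opNorm2 (T.hadamard X₀) * ‖uall‖ * ‖uall‖ := hb
        _ = opNorm2 (T.hadamard X₀) * n := by rw [mul_assoc, hun]
    have hnpos : (0 : ℝ) < n := Nat.cast_pos.mpr hn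
    calc a = (n : ℝ) * a / n := by field_simp
      _ ≤ opNorm2 (T.hadamard X₀) * n / n := by gcongr
      _ = opNorm2 (T.hadamard X₀) := by field_simp
  -- assemble
  have hne : Nonempty {X : Matrix (Fin n) (Fin n) ℂ // opNorm2 X ≤ 1} := by
    refine ⟨⟨0, ?_⟩⟩
    unfold opNorm2
    rw [map_zero, norm_zero]
    exact zero_le_one
  have hbdd : BddAbove (Set.range fun X : {X : Matrix (Fin n) (Fin n) ℂ // opNorm2 X ≤ 1} =>
      opNorm2 (T.hadamard X.1)) := by
    refine ⟨a, ?_⟩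
    rintro _ ⟨X, rfl⟩
    exact hupper X.1 X.2
  have hle : schurNorm T ≤ a := ciSup_le fun X => hupper X.1 X.2
  have hge : a ≤ schurNorm T :=
    le_trans hlow (le_ciSup hbdd (⟨X₀, hX₀⟩ : {X : Matrix (Fin n) (Fin n) ℂ // opNorm2 X ≤ 1}))
  have hfinal : schurNorm T = a := le_antisymm hle hge
  rw [hfinal]
  have : A.trace = (n : ℂ) * c₁ := htrA
  rw [show (matAbs T).trace = A.trace from rfl, this, hc₁a]
  have hnpos : (0 : ℝ) < n := Nat.cast_pos.mpr hn
  push_cast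
  rw [Complex.mul_re]
  simp
  field_simp
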